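/- ζ(3) - ζ(5) = 1/2 - Σ_{n=0}^∞ 1 / ((n²+n+1)·(n²+3n+3)·(n+1)⁵). -/

import Mathlib

open Complex Filter

private noncomputable def zg (n : ℕ) : ℂ := 1 / (2 * ((n : ℂ) ^ 2 + (n : ℂ) + 1))

private noncomputable def zs (n : ℕ) : ℂ :=
  (1 : ℂ) / (((n : ℂ) ^ 2 + (n : ℂ) + 1) * ((n : ℂ) ^ 2 + 3 * (n : ℂ) + 3) * ((n : ℂ) + 1) ^ 5)

private lemma zv_ne (n : ℕ) : ((n : ℂ) ^ 2 + (n : ℂ) + 1) ≠ 0 := by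
  have : ((n : ℂ) ^ 2 + (n : ℂ) + 1) = ((n ^ 2 + n + 1 : ℕ) : ℂ) := by push_cast; ring
  rw [this]
  exact Nat.cast_ne_zero.mpr (by positivity)

private lemma zw_ne (n : ℕ) : ((n : ℂ) ^ 2 + 3 * (n : ℂ) + 3) ≠ 0 := by
  have : ((n : ℂ) ^ 2 + 3 * (n : ℂ) + 3) = ((n ^ 2 + 3 * n + 3 : ℕ) : ℂ) := by push_cast; ring
  rw [this]
  exact Nat.cast_ne_zero.mpr (by positivity)

private lemma zk_ne (n : ℕ) : ((n : ℂ) + 1) ≠ 0 := by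
  have : ((n : ℂ) + 1) = ((n + 1 : ℕ) : ℂ) := by push_cast; ring
  rw [this]
  exact Nat.cast_ne_zero.mpr (by positivity)

/-- The key pointwise partial fraction / telescoping identity. -/
private lemma key_id (n : ℕ) :
    1 / ((n : ℂ) + 1) ^ 3 - 1 / ((n : ℂ) + 1) ^ 5 = zg n - zg (n + 1) - zs n := by
  have h1 := zv_ne n
  have h2 := zw_ne n
  have h3 := zk_ne n
  have h4 : (((n : ℕ) + 1 : ℕ) : ℂ) ^ 2 + (((n : ℕ) + 1 : ℕ) : ℂ) + 1 ≠ 0 := zv_ne (n + 1)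
  unfold zg zs
  push_cast at h4 ⊢
  rw [div_sub_div _ _ (by simp [h3]) (by simp [h3]), div_sub_div _ _ (by simp [h1]) (by simp [h4]),
    div_sub_div _ _ (by simp [h1, h4]) (by simp [h1, h2, h3]), div_eq_div_iff (by simp [h3])
    (by simp [h1, h2, h3, h4])]
  ring

private lemma summable_pow (p : ℕ) (hp : 1 < p) :
    Summable (fun n : ℕ => 1 / ((n : ℂ) + 1) ^ p) := by
  apply Summable.of_norm
  have : Summable (fun n : ℕ => 1 / ((n : ℝ) + 1) ^ p) := by
    have := (summable_nat_add_iff (f := fun n : ℕ => 1 / (n : ℝ) ^ p) 1).2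
      (Real.summable_one_div_nat_pow.mpr hp)
    simpa using this
  refine this.congr fun n => ?_
  rw [norm_div, norm_pow, norm_one]
  congr 2
  have : ((n : ℂ) + 1) = ((n + 1 : ℕ) : ℂ) := by push_cast; ring
  rw [this, Complex.norm_natCast]
  push_cast; ring

private lemma summable_zs : Summable zs := by
  apply Summable.of_norm
  have h5 : Summable (fun n : ℕ => 1 / ((n : ℝ) + 1) ^ 5) := by
    have := (summable_nat_add_iff (f := fun n : ℕ => 1 / (n : ℝ) ^ 5) 1).2
      (Real.summable_one_div_nat_pow.mpr (by norm_num))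
    simpa using this
  apply Summable.of_nonneg_of_le (fun n => norm_nonneg _) _ h5
  intro n
  unfold zs
  rw [norm_div, norm_one]
  have hv : ((n : ℂ) ^ 2 + (n : ℂ) + 1) = ((n ^ 2 + n + 1 : ℕ) : ℂ) := by push_cast; ring
  have hw : ((n : ℂ) ^ 2 + 3 * (n : ℂ) + 3) = ((n ^ 2 + 3 * n + 3 : ℕ) : ℂ) := by push_cast; ring
  have hk : ((n : ℂ) + 1) = ((n + 1 : ℕ) : ℂ) := by push_cast; ring
  rw [hv, hw, hk, norm_mul, norm_mul, norm_pow, Complex.norm_natCast, Complex.norm_natCast,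
    Complex.norm_natCast]
  rw [div_le_div_iff₀ (by positivity) (by positivity)]
  have h1 : (1 : ℝ) ≤ ((n ^ 2 + n + 1 : ℕ) : ℝ) := by exact_mod_cast Nat.one_le_iff_ne_zero.mpr (by positivity)
  have h2 : (1 : ℝ) ≤ ((n ^ 2 + 3 * n + 3 : ℕ) : ℝ) := by exact_mod_cast Nat.one_le_iff_ne_zero.mpr (by positivity)
  have h3 : ((n : ℝ) + 1) ^ 5 = (((n + 1 : ℕ) : ℝ)) ^ 5 := by push_cast; ring
  have h4 : (0 : ℝ) ≤ (((n + 1 : ℕ) : ℝ)) ^ 5 := by positivity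
  nlinarith [mul_le_mul h1 h2 (by norm_num) (le_trans zero_le_one h1)]

private lemma zg_tendsto : Tendsto zg atTop (nhds 0) := by
  apply squeeze_zero_norm (a := fun n : ℕ => 1 / ((n : ℝ) + 1)) _ tendsto_one_div_add_atTop_nhds_zero_nat
  intro n
  unfold zg
  rw [norm_div, norm_one]
  have hv : (2 * ((n : ℂ) ^ 2 + (n : ℂ) + 1)) = ((2 * (n ^ 2 + n + 1) : ℕ) : ℂ) := by
    push_cast; ring
  rw [hv, Complex.norm_natCast]
  rw [div_le_div_iff₀ (by positivity) (by positivity)]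
  push_cast
  nlinarith [sq_nonneg (n : ℝ), Nat.cast_nonneg (α := ℝ) n]

private lemma telescope_sum : HasSum (fun n => zg n - zg (n + 1)) (1 / 2 : ℂ) := by
  have hsum : Summable (fun n => zg n - zg (n + 1)) := by
    have : (fun n => zg n - zg (n + 1)) =
        fun n : ℕ => (1 / ((n : ℂ) + 1) ^ 3 - 1 / ((n : ℂ) + 1) ^ 5) + zs n := by
      funext n; rw [key_id n]; ring
    rw [this]
    exact (((summable_pow 3 (by norm_num)).sub (summable_pow 5 (by norm_num))).add summable_zs)
  refine hsum.hasSum_iff_tendsto_nat.mpr ?_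
  have : ∀ n : ℕ, ∑ i ∈ Finset.range n, (zg i - zg (i + 1)) = zg 0 - zg n :=
    fun n => Finset.sum_range_sub' zg n
  simp only [this]
  have h0 : zg 0 = 1 / 2 := by unfold zg; norm_num
  rw [h0]
  simpa using (tendsto_const_nhds (x := (1/2 : ℂ))).sub zg_tendsto

theorem zeta3_sub_zeta5_series :
    riemannZeta 3 - riemannZeta 5 =
      1 / 2 - ∑' n : ℕ, (1 : ℂ) /
        (((n : ℂ) ^ 2 + (n : ℂ) + 1) * ((n : ℂ) ^ 2 + 3 * (n : ℂ) + 3) *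
          ((n : ℂ) + 1) ^ 5) := by
  have hz3 : riemannZeta 3 = ∑' n : ℕ, 1 / ((n : ℂ) + 1) ^ 3 := by
    rw [zeta_eq_tsum_one_div_nat_add_one_cpow (by norm_num)]
    congr 1; ext n; norm_cast
  have hz5 : riemannZeta 5 = ∑' n : ℕ, 1 / ((n : ℂ) + 1) ^ 5 := by
    rw [zeta_eq_tsum_one_div_nat_add_one_cpow (by norm_num)]
    congr 1; ext n; norm_cast
  have hS : (∑' n : ℕ, zs n) = ∑' n : ℕ, (1 : ℂ) /
      (((n : ℂ) ^ 2 + (n : ℂ) + 1) * ((n : ℂ) ^ 2 + 3 * (n : ℂ) + 3) * ((n : ℂ) + 1) ^ 5) := rfl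
  have hmain : riemannZeta 3 - riemannZeta 5 = (1 / 2 : ℂ) - ∑' n : ℕ, zs n := by
    rw [hz3, hz5, ← Summable.tsum_sub (summable_pow 3 (by norm_num)) (summable_pow 5 (by norm_num))]
    have : (∑' n : ℕ, (1 / ((n : ℂ) + 1) ^ 3 - 1 / ((n : ℂ) + 1) ^ 5)) =
        ∑' n : ℕ, ((zg n - zg (n + 1)) - zs n) := by
      congr 1; funext n; rw [key_id n]
    rw [this, Summable.tsum_sub telescope_sum.summable summable_zs, telescope_sum.tsum_eq]
  rw [hmain, hS]
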